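/- Let c_{k,n} denote the coefficient of x^n in the power series (∑_{i≥1} x^i/i)^k. Then 0 ≤ c_{k,n} ≤ (2e)^n · k!/n^k for all positive integers k, n. -/

import Mathlib

open Finset PowerSeries Real

lemma nk_le_exp_fact (k n : ℕ) (hk : 0 < k) : (n : ℝ) ^ k ≤ Real.exp n * k.factorial := by
  have hkR : (0:ℝ) < k := by exact_mod_cast hk
  have h1 : (n : ℝ) ≤ k * Real.exp ((n - k)/k) := by
    have := Real.add_one_le_exp ((n - k : ℝ)/k)
    have h2 : ((n:ℝ) - k)/k + 1 = n / k := by field_simp; ring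
    rw [h2] at this
    calc (n:ℝ) = k * (n/k) := by field_simp
    _ ≤ k * Real.exp ((n-k)/k) := by nlinarith [this]
  have h3 : (n:ℝ)^k ≤ (k * Real.exp ((n-k)/k))^k :=
    pow_le_pow_left₀ (by positivity) h1 k
  have h4 : (k * Real.exp ((n-k)/k))^k = (k:ℝ)^k * Real.exp ((n:ℝ)-k) := by
    rw [mul_pow, ← Real.exp_nat_mul]
    congr 2
    field_simp
  have h5 : (k:ℝ)^k ≤ Real.exp k * k.factorial := by
    have := Real.pow_div_factorial_le_exp (x := (k:ℝ)) (by positivity) k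
    rw [div_le_iff₀ (by positivity)] at this
    linarith [this]
  calc (n:ℝ)^k ≤ (k:ℝ)^k * Real.exp ((n:ℝ)-k) := by rw [← h4]; exact h3
  _ ≤ (Real.exp k * k.factorial) * Real.exp ((n:ℝ)-k) := by
      apply mul_le_mul_of_nonneg_right h5 (Real.exp_nonneg _)
  _ = Real.exp n * k.factorial := by rw [mul_right_comm, ← Real.exp_add]; ring_nf

def compOf (k n : ℕ) (l : ℕ →₀ ℕ) : Composition n :=
  if h : (∀ i ∈ Finset.range k, l i ≠ 0) ∧ ∑ i ∈ Finset.range k, l i = n then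
    ⟨List.ofFn (fun i : Fin k => l i),
      by
        intro b hb
        rw [List.mem_ofFn] at hb
        obtain ⟨i, hi⟩ := hb
        rw [← hi]
        exact Nat.pos_of_ne_zero (h.1 i (Finset.mem_range.2 i.isLt)),
      by
        rw [List.sum_ofFn, Fin.sum_univ_eq_sum_range]
        exact h.2⟩
  else Composition.ones n

theorem coeff_pow_log_series_bound (k n : ℕ) (hk : 0 < k) (hn : 0 < n) :
    0 ≤ PowerSeries.coeff n
        ((PowerSeries.mk fun i => if i = 0 then (0 : ℝ) else 1 / i) ^ k) ∧
    PowerSeries.coeff n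
        ((PowerSeries.mk fun i => if i = 0 then (0 : ℝ) else 1 / i) ^ k)
      ≤ (2 * Real.exp 1) ^ n * (k.factorial : ℝ) / (n : ℝ) ^ k := by
  set f : PowerSeries ℝ := PowerSeries.mk fun i => if i = 0 then (0 : ℝ) else 1 / i with hf
  have hfc : ∀ j : ℕ, PowerSeries.coeff j f = if j = 0 then (0:ℝ) else 1 / j := by
    intro j; simp [hf]
  have hfnn : ∀ j : ℕ, 0 ≤ PowerSeries.coeff j f := by
    intro j; rw [hfc]; split
    · exact le_rfl
    · positivity
  rw [PowerSeries.coeff_pow]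
  have hnonneg : (0:ℝ) ≤ ∑ l ∈ finsuppAntidiag (range k) n, ∏ i ∈ range k, PowerSeries.coeff (l i) f := by
    apply Finset.sum_nonneg
    intro l _
    exact Finset.prod_nonneg fun i _ => hfnn _
  refine ⟨hnonneg, ?_⟩
  -- bound the sum by the number of tuples with all parts positive
  have hstep : ∑ l ∈ finsuppAntidiag (range k) n, ∏ i ∈ range k, PowerSeries.coeff (l i) f
      ≤ ((finsuppAntidiag (range k) n).filter (fun l => ∀ i ∈ range k, l i ≠ 0)).card := by
    calc ∑ l ∈ finsuppAntidiag (range k) n, ∏ i ∈ range k, PowerSeries.coeff (l i) f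
        ≤ ∑ l ∈ finsuppAntidiag (range k) n,
            (if ∀ i ∈ range k, l i ≠ 0 then (1:ℝ) else 0) := by
          apply Finset.sum_le_sum
          intro l _
          split
          · rename_i hpos
            apply Finset.prod_le_one (fun i _ => hfnn _)
            intro i hi
            rw [hfc, if_neg (hpos i hi)]
            have h1 : (1:ℝ) ≤ (l i : ℝ) := by
              exact_mod_cast Nat.one_le_iff_ne_zero.2 (hpos i hi)
            rw [div_le_one (by linarith)]
            exact h1
          · rename_i hpos
            push_neg at hpos
            obtain ⟨i, hi, hzero⟩ := hpos
            rw [Finset.prod_eq_zero hi]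
            rw [hfc, if_pos hzero]
      _ = ((finsuppAntidiag (range k) n).filter (fun l => ∀ i ∈ range k, l i ≠ 0)).card := by
          rw [Finset.sum_ite, Finset.sum_const_zero, add_zero, Finset.sum_const,
            nsmul_eq_mul, mul_one]
  -- the number of positive tuples is at most 2^(n-1) ≤ 2^n
  have hcard : ((finsuppAntidiag (range k) n).filter (fun l => ∀ i ∈ range k, l i ≠ 0)).card
      ≤ 2 ^ n := by
    have hinj : ((finsuppAntidiag (range k) n).filter (fun l => ∀ i ∈ range k, l i ≠ 0)).card
        ≤ Fintype.card (Composition n) := by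
      classical
      apply Finset.card_le_card_of_injOn (fun l => compOf k n l)
      · intro l _; exact Finset.mem_univ _
      · intro l hl l' hl' heq
        simp only [Finset.mem_coe, Finset.mem_filter, mem_finsuppAntidiag] at hl hl'
        have hc1 : (∀ i ∈ Finset.range k, l i ≠ 0) ∧ ∑ i ∈ Finset.range k, l i = n :=
          ⟨hl.2, hl.1.1⟩
        have hc2 : (∀ i ∈ Finset.range k, l' i ≠ 0) ∧ ∑ i ∈ Finset.range k, l' i = n :=
          ⟨hl'.2, hl'.1.1⟩
        simp only [compOf, dif_pos hc1, dif_pos hc2, Composition.mk.injEq] at heq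
        have hfun := List.ofFn_injective heq
        ext j
        by_cases hj : j < k
        · exact congrFun hfun ⟨j, hj⟩
        · have h1 : l j = 0 := by
            by_contra hc
            exact hj (Finset.mem_range.1 (hl.1.2 (Finsupp.mem_support_iff.2 hc)))
          have h2 : l' j = 0 := by
            by_contra hc
            exact hj (Finset.mem_range.1 (hl'.1.2 (Finsupp.mem_support_iff.2 hc)))
          rw [h1, h2]
    calc _ ≤ Fintype.card (Composition n) := hinj
      _ = 2 ^ (n - 1) := composition_card n
      _ ≤ 2 ^ n := Nat.pow_le_pow_right (by norm_num) (Nat.sub_le n 1)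
  have h2n : ∑ l ∈ finsuppAntidiag (range k) n, ∏ i ∈ range k, PowerSeries.coeff (l i) f
      ≤ (2:ℝ) ^ n := by
    calc _ ≤ _ := hstep
      _ ≤ ((2 ^ n : ℕ) : ℝ) := by exact_mod_cast hcard
      _ = (2:ℝ) ^ n := by push_cast; ring
  have hnpos : (0:ℝ) < (n:ℝ) ^ k := by positivity
  rw [le_div_iff₀ hnpos]
  have hexp : Real.exp n = Real.exp 1 ^ n := by
    rw [← Real.exp_nat_mul]; norm_num
  calc (∑ l ∈ finsuppAntidiag (range k) n, ∏ i ∈ range k, PowerSeries.coeff (l i) f) * (n:ℝ)^k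
      ≤ (2:ℝ)^n * (n:ℝ)^k := mul_le_mul_of_nonneg_right h2n (le_of_lt hnpos)
    _ ≤ (2:ℝ)^n * (Real.exp n * k.factorial) :=
        mul_le_mul_of_nonneg_left (nk_le_exp_fact k n hk) (by positivity)
    _ = (2 * Real.exp 1) ^ n * (k.factorial : ℝ) := by
        rw [mul_pow, hexp]; ring
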